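/- K4 equals the intersection over all n ≥ 0 of the logics K4C_n. -/

import Mathlib

/-- Modal formulas: variables, ⊤, ¬, ∧, □. -/
inductive Fml : Type
  | var : ℕ → Fml
  | top : Fml
  | neg : Fml → Fml
  | and : Fml → Fml → Fml
  | box : Fml → Fml
deriving DecidableEq

namespace Fml
/-- Material implication, defined from ¬ and ∧. -/
def imp (φ ψ : Fml) : Fml := .neg (.and φ (.neg ψ))
/-- Disjunction. -/
def or (φ ψ : Fml) : Fml := .neg (.and (.neg φ) (.neg ψ))
/-- ◇φ := ¬□¬φ. -/
def dia (φ : Fml) : Fml := .neg (.box (.neg φ))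
/-- □*φ := φ ∧ □φ. -/
def boxs (φ : Fml) : Fml := .and φ (.box φ)
/-- ◇*φ := φ ∨ ◇φ. -/
def dias (φ : Fml) : Fml := Fml.or φ (dia φ)
end Fml

/-- Kripke satisfaction. -/
def sat {W : Type} (R : W → W → Prop) (V : ℕ → Set W) : W → Fml → Prop
  | x, .var p => x ∈ V p
  | _, .top => True
  | x, .neg φ => ¬ sat R V x φ
  | x, .and φ ψ => sat R V x φ ∧ sat R V x ψ
  | x, .box φ => ∀ y, R x y → sat R V y φ

/-- P_n(φ0; φ1,...,φn): P_0(φ0) = ◇φ0, P_n(φ0,φ1,...,φn) = ◇(φ1 ∧ P_{n-1}(φ0,φ2,...,φn)). -/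
def Pfml (φ0 : Fml) : List Fml → Fml
  | [] => φ0.dia
  | ψ :: rest => (Fml.and ψ (Pfml φ0 rest)).dia

/-- Conjunction of ¬(φ ∧ ψ) for ψ in the list. -/
def conjNeg (φ : Fml) : List Fml → Fml
  | [] => .top
  | ψ :: rest => .and (.neg (.and φ ψ)) (conjNeg φ rest)

/-- D_n: pairwise disjointness conjunction ⋀_{i<j} ¬(φ_i ∧ φ_j). -/
def Dfml : List Fml → Fml
  | [] => .top
  | φ :: rest => .and (conjNeg φ rest) (Dfml rest)

/-- The scheme C_n instance on φ0,φ1,...,φn (φs = [φ1,...,φn]). -/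
def Cfml (φ0 : Fml) (φs : List Fml) : Fml :=
  ((Dfml (φ0 :: φs)).boxs).imp ((φ0.dia).imp ((Fml.and φ0 (Fml.neg (Pfml φ0 φs))).dia))

/-- The scheme C_n* instance: as C_n but with ◇* in the consequent. -/
def CfmlStar (φ0 : Fml) (φs : List Fml) : Fml :=
  ((Dfml (φ0 :: φs)).boxs).imp ((φ0.dia).imp ((Fml.and φ0 (Fml.neg (Pfml φ0 φs))).dias))

/-- An ascending R-chain. -/
def AscChain {W : Type} (R : W → W → Prop) (x : ℕ → W) : Prop := ∀ m, R (x m) (x (m+1))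

/-- A strictly ascending R-chain. -/
def StrictAscChain {W : Type} (R : W → W → Prop) (x : ℕ → W) : Prop :=
  AscChain R x ∧ ∀ m, ¬ R (x (m+1)) (x m)

/-- The R-cluster of x. -/
def cluster {W : Type} (R : W → W → Prop) (x : W) : Set W := {y | x = y ∨ (R x y ∧ R y x)}

/-- The frame has a cycle of length k (k ≥ 1): k distinct points x_0 R x_1 R ... R x_{k-1} R x_0. -/
def HasCycle {W : Type} (R : W → W → Prop) (k : ℕ) : Prop :=
  1 ≤ k ∧ ∃ x : ℕ → W, (∀ i j, i < k → j < k → x i = x j → i = j) ∧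
    ∀ i < k, R (x i) (x ((i+1) % k))

/-- Circumference at most n: every cycle has length ≤ n. -/
def CircumLE {W : Type} (R : W → W → Prop) (n : ℕ) : Prop := ∀ k, HasCycle R k → k ≤ n

/-- The frame (W,R) validates the scheme C_n. -/
def ValidatesCn {W : Type} (R : W → W → Prop) (n : ℕ) : Prop :=
  ∀ (V : ℕ → Set W) (x : W) (φ0 : Fml) (φs : List Fml), φs.length = n →
    sat R V x (Cfml φ0 φs)

/-- A Boolean valuation on formulas (box-formulas and variables as atoms). -/
def BoolEval (w : Fml → Bool) : Prop :=
  w .top = true ∧ (∀ φ, w (.neg φ) = !w φ) ∧ (∀ φ ψ, w (.and φ ψ) = (w φ && w ψ))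

/-- Propositional tautologies. -/
def Tautology (φ : Fml) : Prop := ∀ w, BoolEval w → w φ = true

/-- Theorems of the smallest normal modal logic containing the axiom set Ax. -/
inductive Prov (Ax : Set Fml) : Fml → Prop
  | taut {φ} : Tautology φ → Prov Ax φ
  | kax (φ ψ) : Prov Ax ((Fml.box (φ.imp ψ)).imp ((Fml.box φ).imp (Fml.box ψ)))
  | ax {φ} : φ ∈ Ax → Prov Ax φ
  | mp {φ ψ} : Prov Ax (φ.imp ψ) → Prov Ax φ → Prov Ax ψ
  | nec {φ} : Prov Ax φ → Prov Ax (.box φ)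

/-- All instances of the transitivity scheme 4. -/
def Ax4 : Set Fml := {χ | ∃ φ, χ = (Fml.box φ).imp (Fml.box (Fml.box φ))}

/-- Axioms of K4C_n: scheme 4 together with all instances of scheme C_n. -/
def AxK4C (n : ℕ) : Set Fml :=
  Ax4 ∪ {χ | ∃ (φ0 : Fml) (φs : List Fml), φs.length = n ∧ χ = Cfml φ0 φs}

section Basics
variable {W : Type} {R : W → W → Prop} {V : ℕ → Set W}

lemma sat_neg {x : W} {A : Fml} : sat R V x (.neg A) ↔ ¬ sat R V x A := Iff.rfl
lemma sat_and {x : W} {A B : Fml} : sat R V x (.and A B) ↔ sat R V x A ∧ sat R V x B := Iff.rfl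
lemma sat_box {x : W} {A : Fml} : sat R V x (.box A) ↔ ∀ y, R x y → sat R V y A := Iff.rfl

lemma sat_imp {x : W} {A B : Fml} : sat R V x (A.imp B) ↔ (sat R V x A → sat R V x B) := by
  simp only [Fml.imp, sat_neg, sat_and]; tauto

lemma sat_dia {x : W} {A : Fml} : sat R V x (A.dia) ↔ ∃ y, R x y ∧ sat R V y A := by
  simp only [Fml.dia, sat_neg, sat_box]
  constructor
  · intro h
    by_contra hc
    push_neg at hc
    exact h (fun y hy hs => hc y hy hs)
  · rintro ⟨y, hy, hs⟩ h
    exact (h y hy) hs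

lemma sat_boxs {x : W} {A : Fml} : sat R V x (A.boxs) ↔ sat R V x A ∧ ∀ y, R x y → sat R V y A :=
  Iff.rfl

end Basics

section BoolStuff
variable {w : Fml → Bool}

lemma BoolEval.neg' (h : BoolEval w) (A : Fml) : w (.neg A) = !w A := h.2.1 A
lemma BoolEval.and' (h : BoolEval w) (A B : Fml) : w (.and A B) = (w A && w B) := h.2.2 A B
lemma BoolEval.imp' (h : BoolEval w) (A B : Fml) : w (A.imp B) = (!(w A && !w B)) := by
  rw [Fml.imp, h.neg', h.and', h.neg']
lemma BoolEval.imp_true (h : BoolEval w) {A B : Fml} :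
    w (A.imp B) = true ↔ (w A = true → w B = true) := by
  rw [h.imp' A B]
  cases hA : w A <;> cases hB : w B <;> simp

/-- list conjunction -/
def conjL : List Fml → Fml
  | [] => .top
  | a :: l => .and a (conjL l)

lemma BoolEval.conjL_true (h : BoolEval w) (l : List Fml) :
    w (conjL l) = true ↔ ∀ a ∈ l, w a = true := by
  induction l with
  | nil => simp [conjL, h.1]
  | cons a l ih => simp [conjL, h.and', ih]

/-- iterated implication -/
def impsChain : List Fml → Fml → Fml
  | [], C => C
  | a :: l, C => a.imp (impsChain l C)

lemma BoolEval.impsChain_true (h : BoolEval w) (l : List Fml) (C : Fml) :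
    w (impsChain l C) = true ↔ ((∀ a ∈ l, w a = true) → w C = true) := by
  induction l with
  | nil => simp [impsChain]
  | cons a l ih =>
    simp only [impsChain, h.imp_true, ih, List.mem_cons]
    constructor
    · intro hh hall; exact hh (hall a (Or.inl rfl)) (fun b hb => hall b (Or.inr hb))
    · intro hh ha hall
      refine hh ?_
      rintro b (rfl | hb)
      · exact ha
      · exact hall b hb

end BoolStuff
section ProvStuff
variable {Ax : Set Fml}

lemma Prov.mono {Ax Ax' : Set Fml} (hsub : Ax ⊆ Ax') {A : Fml} (h : Prov Ax A) :
    Prov Ax' A := by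
  induction h with
  | taut ht => exact Prov.taut ht
  | kax A B => exact Prov.kax A B
  | ax hm => exact Prov.ax (hsub hm)
  | mp _ _ ih1 ih2 => exact Prov.mp ih1 ih2
  | nec _ ih => exact Prov.nec ih

lemma prov_impsChain {l : List Fml} {C : Fml} (h : Prov Ax (impsChain l C))
    (ha : ∀ a ∈ l, Prov Ax a) : Prov Ax C := by
  induction l with
  | nil => exact h
  | cons a l ih =>
    exact ih (Prov.mp h (ha a List.mem_cons_self)) (fun b hb => ha b (List.mem_cons_of_mem a hb))

lemma taut_mp1 {A B : Fml} (ht : Tautology (A.imp B)) (h1 : Prov Ax A) : Prov Ax B :=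
  Prov.mp (Prov.taut ht) h1

lemma taut_mp2 {A B C : Fml} (ht : Tautology (A.imp (B.imp C)))
    (h1 : Prov Ax A) (h2 : Prov Ax B) : Prov Ax C :=
  Prov.mp (Prov.mp (Prov.taut ht) h1) h2

lemma taut_mp3 {A B C D : Fml} (ht : Tautology (A.imp (B.imp (C.imp D))))
    (h1 : Prov Ax A) (h2 : Prov Ax B) (h3 : Prov Ax C) : Prov Ax D :=
  Prov.mp (Prov.mp (Prov.mp (Prov.taut ht) h1) h2) h3

/-- derived rule: from ⊢ A → B infer ⊢ □A → □B -/
lemma provK1 {A B : Fml} (h : Prov Ax (A.imp B)) :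
    Prov Ax ((Fml.box A).imp (Fml.box B)) :=
  Prov.mp (Prov.kax A B) (Prov.nec h)

/-- derived rule: from ⊢ A → (B → C) infer ⊢ □A → (□B → □C) -/
lemma provK2 {A B C : Fml} (h : Prov Ax (A.imp (B.imp C))) :
    Prov Ax ((Fml.box A).imp ((Fml.box B).imp (Fml.box C))) := by
  have h1 : Prov Ax ((Fml.box A).imp (Fml.box (B.imp C))) := provK1 h
  have h2 := Prov.kax (Ax := Ax) B C
  refine taut_mp2 ?_ h1 h2
  intro w hw
  simp only [hw.imp_true]
  tauto

lemma tautology_of_boolean {A : Fml}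
    (h : ∀ w : Fml → Bool, BoolEval w → w A = true) : Tautology A := h

/-- ⊢ ⋀(map box l) → □(⋀ l)   (K only) -/
lemma prov_conj_box (l : List Fml) :
    Prov Ax ((conjL (l.map Fml.box)).imp (Fml.box (conjL l))) := by
  induction l with
  | nil =>
    have h1 : Prov Ax (Fml.box (conjL [])) := Prov.nec (Prov.taut (fun w hw => hw.1))
    refine taut_mp1 ?_ h1
    intro w hw
    simp only [hw.imp_true]
    exact fun h _ => h
  | cons a l ih =>
    -- conjL ((a::l).map box) = (□a) ∧ conjL (l.map box)
    have h2 : Prov Ax ((Fml.box a).imp ((Fml.box (conjL l)).imp (Fml.box (conjL (a :: l))))) := by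
      refine provK2 (Prov.taut ?_)
      intro w hw
      simp only [hw.imp_true, conjL, hw.and']
      intro h1 h2; rw [h1, h2]; rfl
    refine taut_mp2 ?_ ih h2
    intro w hw
    simp only [hw.imp_true, List.map_cons, conjL, hw.and', Bool.and_eq_true]
    tauto

/-- Using axiom 4: ⊢ □a → □(a ∧ □a), for Ax containing Ax4 -/
lemma prov_box_boxs {Ax : Set Fml} (h4 : Ax4 ⊆ Ax) (a : Fml) :
    Prov Ax ((Fml.box a).imp (Fml.box (a.boxs))) := by
  have hax : Prov Ax ((Fml.box a).imp (Fml.box (Fml.box a))) :=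
    Prov.ax (h4 ⟨a, rfl⟩)
  have h2 : Prov Ax ((Fml.box a).imp ((Fml.box (Fml.box a)).imp (Fml.box (a.boxs)))) := by
    refine provK2 (Prov.taut ?_)
    intro w hw
    simp only [hw.imp_true, Fml.boxs, hw.and', Bool.and_eq_true]
    tauto
  refine taut_mp2 ?_ hax h2
  intro w hw
  simp only [hw.imp_true]
  tauto

/-- ⊢ ⋀(map box l) → □(⋀ (map boxs l)), given Ax4 ⊆ Ax -/
lemma prov_conj_box_boxs {Ax : Set Fml} (h4 : Ax4 ⊆ Ax) (l : List Fml) :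
    Prov Ax ((conjL (l.map Fml.box)).imp (Fml.box (conjL (l.map Fml.boxs)))) := by
  have key : Prov Ax ((conjL (l.map Fml.box)).imp (conjL ((l.map Fml.boxs).map Fml.box))) := by
    induction l with
    | nil =>
      refine Prov.taut ?_
      intro w hw
      simp only [List.map_nil, hw.imp_true]
      exact fun h => h
    | cons a l ih =>
      have hb := prov_box_boxs h4 a
      refine taut_mp2 ?_ ih hb
      intro w hw
      simp only [List.map_cons, conjL, hw.imp_true, hw.and', Bool.and_eq_true]
      tauto
  have h1 := prov_conj_box (Ax := Ax) (l.map Fml.boxs)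
  refine taut_mp2 ?_ key h1
  intro w hw
  simp only [hw.imp_true]
  tauto

end ProvStuff
section Semantics
variable {W : Type} {R : W → W → Prop} {V : ℕ → Set W}

lemma conjNeg_spec {x : W} {A : Fml} {l : List Fml} (h : sat R V x (conjNeg A l)) :
    ∀ B ∈ l, ¬ (sat R V x A ∧ sat R V x B) := by
  induction l with
  | nil => simp
  | cons B l ih =>
    obtain ⟨h1, h2⟩ := h
    intro C hC
    rcases List.mem_cons.mp hC with h | h
    · subst h; exact h1
    · exact ih h2 C h

lemma Dfml_spec {x : W} {l : List Fml} (h : sat R V x (Dfml l)) :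
    ∀ i j (hij : i < j) (hj : j < l.length),
      ¬ (sat R V x (l.get ⟨i, lt_trans hij hj⟩) ∧ sat R V x (l.get ⟨j, hj⟩)) := by
  induction l generalizing x with
  | nil => intro i j hij hj; exact absurd hj (Nat.not_lt_zero j)
  | cons A l ih =>
    obtain ⟨h1, h2⟩ := h
    intro i j hij hj
    match i, j with
    | 0, (j+1) =>
      simp only [List.get]
      exact conjNeg_spec h1 _ (l.get_mem _)
    | (i+1), (j+1) =>
      simp only [List.get]
      exact ih h2 i j (Nat.lt_of_succ_lt_succ hij) (Nat.lt_of_succ_lt_succ hj)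

/-- Unfolding P: from sat y (Pfml φ0 l) with R x y and transitivity, get a list of
points all accessible from x, satisfying the respective formulas of l. -/
lemma Pfml_chain (htrans : Transitive R) {x y : W} (hxy : R x y) {φ0 : Fml} {l : List Fml}
    (h : sat R V y (Pfml φ0 l)) :
    ∃ zs : List W, zs.length = l.length ∧
      ∀ i (hi : i < zs.length) (hi' : i < l.length),
        R x (zs.get ⟨i, hi⟩) ∧ sat R V (zs.get ⟨i, hi⟩) (l.get ⟨i, hi'⟩) := by
  induction l generalizing y with
  | nil => exact ⟨[], rfl, by simp⟩
  | cons A l ih =>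
    rw [Pfml, sat_dia] at h
    obtain ⟨z, hyz, hzA, hzP⟩ := h
    have hxz : R x z := htrans hxy hyz
    obtain ⟨zs, hlen, hspec⟩ := ih hxz hzP
    refine ⟨z :: zs, by simp [hlen], ?_⟩
    intro i hi hi'
    match i with
    | 0 => exact ⟨hxz, hzA⟩
    | (i+1) =>
      simp only [List.get]
      exact hspec i (Nat.lt_of_succ_lt_succ hi) (Nat.lt_of_succ_lt_succ hi')

/-- Finite transitive frames validate C_n for n = card W. -/
lemma finite_trans_validates [Fintype W] (htrans : Transitive R) :
    ValidatesCn R (Fintype.card W) := by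
  intro V x φ0 φs hlen
  rw [Cfml, sat_imp, sat_imp]
  intro hD hdia
  rw [sat_boxs] at hD
  obtain ⟨hDx, hDsucc⟩ := hD
  rw [sat_dia] at hdia
  obtain ⟨y0, hxy0, hy0⟩ := hdia
  rw [sat_dia]
  by_contra hc
  push_neg at hc
  have hy0P : sat R V y0 (Pfml φ0 φs) := by
    have := hc y0 hxy0
    rw [sat_and, sat_neg] at this
    by_contra hP
    exact this ⟨hy0, hP⟩
  obtain ⟨zs, hzlen, hzspec⟩ := Pfml_chain htrans hxy0 hy0P
  -- build injection Fin (n+1) → W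
  set n := Fintype.card W with hn
  have hzslen : zs.length = n := hzlen.trans hlen
  let p : Fin (n+1) → W := fun i =>
    match i with
    | ⟨0, _⟩ => y0
    | ⟨i+1, hi⟩ => zs.get ⟨i, by omega⟩
  have hLlen : (φ0 :: φs).length = n + 1 := by simp [hlen]
  have hsatp : ∀ i : Fin (n+1), sat R V (p i) ((φ0 :: φs).get ⟨i, by rw [hLlen]; exact i.2⟩) := by
    rintro ⟨i, hi⟩
    match i with
    | 0 => exact hy0
    | (i+1) =>
      simp only [p, List.get]
      exact (hzspec i (by omega) (by omega)).2
  have hRp : ∀ i : Fin (n+1), R x (p i) := by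
    rintro ⟨i, hi⟩
    match i with
    | 0 => exact hxy0
    | (i+1) => exact (hzspec i (by omega) (by omega)).1
  have hinj : Function.Injective p := by
    intro i j hij
    by_contra hne
    -- wlog i < j
    rcases Nat.lt_or_ge i.val j.val with hlt | hge
    · have hD' := Dfml_spec (hDsucc (p j) (hRp j)) i.val j.val hlt (by rw [hLlen]; exact j.2)
      exact hD' ⟨by rw [← hij] at hD' ⊢; exact hsatp i, hsatp j⟩
    · have hlt' : j.val < i.val := by
        rcases Nat.lt_or_eq_of_le hge with h | h
        · exact h
        · exact absurd (Fin.ext h.symm) hne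
      have hD' := Dfml_spec (hDsucc (p i) (hRp i)) j.val i.val hlt' (by rw [hLlen]; exact i.2)
      exact hD' ⟨by rw [hij] at hD' ⊢; exact hsatp j, hsatp i⟩
  have := Fintype.card_le_of_injective p hinj
  rw [Fintype.card_fin] at this
  omega

end Semantics
section Soundness
variable {W : Type} {R : W → W → Prop}

lemma sat_of_tautology {V : ℕ → Set W} {x : W} {A : Fml} (ht : Tautology A) :
    sat R V x A := by
  classical
  set w : Fml → Bool := fun B => decide (sat R V x B) with hw
  have hbe : BoolEval w := by
    refine ⟨by simp only [hw]; exact @decide_eq_true _ (Classical.propDecidable _) trivial, fun B => ?_, fun B C => ?_⟩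
    · simp [hw, sat_neg]
    · simp [hw, sat_and]
  have := ht w hbe
  simpa [hw] using this

lemma soundness {n : ℕ} (htrans : Transitive R) (hcn : ValidatesCn R n)
    {A : Fml} (h : Prov (AxK4C n) A) : ∀ (V : ℕ → Set W) (x : W), sat R V x A := by
  induction h with
  | taut ht => exact fun V x => sat_of_tautology ht
  | kax B C =>
    intro V x
    rw [sat_imp, sat_box]
    intro h1
    rw [sat_imp, sat_box]
    intro h2 y hy
    have := h1 y hy
    rw [sat_imp] at this
    exact this (h2 y hy)
  | ax hm =>
    intro V x
    rcases hm with ⟨B, rfl⟩ | ⟨φ0, φs, hlen, rfl⟩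
    · rw [sat_imp, sat_box]
      intro h1
      rw [sat_box]
      intro y hy
      rw [sat_box]
      intro z hz
      exact h1 z (htrans hy hz)
    · exact hcn V x φ0 φs hlen
  | mp _ _ ih1 ih2 =>
    intro V x
    have := ih1 V x
    rw [sat_imp] at this
    exact this (ih2 V x)
  | nec _ ih =>
    intro V x
    rw [sat_box]
    exact fun y _ => ih V y

end Soundness
section Canonical

/-- subformula list -/
def subf : Fml → List Fml
  | .var p => [.var p]
  | .top => [.top]
  | .neg a => .neg a :: subf a
  | .and a b => .and a b :: (subf a ++ subf b)
  | .box a => .box a :: subf a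

lemma mem_subf_self (a : Fml) : a ∈ subf a := by
  cases a <;> simp [subf]

lemma subf_closed_neg : ∀ {χ a : Fml}, Fml.neg a ∈ subf χ → a ∈ subf χ := by
  intro χ
  induction χ with
  | var p => intro a h; simp [subf] at h
  | top => intro a h; simp [subf] at h
  | neg b ih =>
    intro a h
    rw [subf, List.mem_cons] at h
    rcases h with h | h
    · rw [Fml.neg.injEq] at h
      subst h
      exact List.mem_cons_of_mem _ (mem_subf_self a)
    · exact List.mem_cons_of_mem _ (ih h)
  | and b c ihb ihc =>
    intro a h
    rw [subf, List.mem_cons] at h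
    rcases h with h | h
    · exact absurd h (by simp)
    · rw [List.mem_append] at h
      rcases h with h | h
      · exact List.mem_cons_of_mem _ (List.mem_append_left _ (ihb h))
      · exact List.mem_cons_of_mem _ (List.mem_append_right _ (ihc h))
  | box b ih =>
    intro a h
    rw [subf, List.mem_cons] at h
    rcases h with h | h
    · exact absurd h (by simp)
    · exact List.mem_cons_of_mem _ (ih h)

lemma subf_closed_and : ∀ {χ a b : Fml}, Fml.and a b ∈ subf χ → a ∈ subf χ ∧ b ∈ subf χ := by
  intro χ
  induction χ with
  | var p => intro a b h; simp [subf] at h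
  | top => intro a b h; simp [subf] at h
  | neg c ih =>
    intro a b h
    rw [subf, List.mem_cons] at h
    rcases h with h | h
    · exact absurd h (by simp)
    · exact ⟨List.mem_cons_of_mem _ (ih h).1, List.mem_cons_of_mem _ (ih h).2⟩
  | and c d ihc ihd =>
    intro a b h
    rw [subf, List.mem_cons] at h
    rcases h with h | h
    · rw [Fml.and.injEq] at h
      obtain ⟨rfl, rfl⟩ := h
      exact ⟨List.mem_cons_of_mem _ (List.mem_append_left _ (mem_subf_self a)),
        List.mem_cons_of_mem _ (List.mem_append_right _ (mem_subf_self b))⟩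
    · rw [List.mem_append] at h
      rcases h with h | h
      · exact ⟨List.mem_cons_of_mem _ (List.mem_append_left _ (ihc h).1),
          List.mem_cons_of_mem _ (List.mem_append_left _ (ihc h).2)⟩
      · exact ⟨List.mem_cons_of_mem _ (List.mem_append_right _ (ihd h).1),
          List.mem_cons_of_mem _ (List.mem_append_right _ (ihd h).2)⟩
  | box c ih =>
    intro a b h
    rw [subf, List.mem_cons] at h
    rcases h with h | h
    · exact absurd h (by simp)
    · exact ⟨List.mem_cons_of_mem _ (ih h).1, List.mem_cons_of_mem _ (ih h).2⟩

lemma subf_closed_box : ∀ {χ a : Fml}, Fml.box a ∈ subf χ → a ∈ subf χ := by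
  intro χ
  induction χ with
  | var p => intro a h; simp [subf] at h
  | top => intro a h; simp [subf] at h
  | neg b ih =>
    intro a h
    rw [subf, List.mem_cons] at h
    rcases h with h | h
    · exact absurd h (by simp)
    · exact List.mem_cons_of_mem _ (ih h)
  | and b c ihb ihc =>
    intro a h
    rw [subf, List.mem_cons] at h
    rcases h with h | h
    · exact absurd h (by simp)
    · rw [List.mem_append] at h
      rcases h with h | h
      · exact List.mem_cons_of_mem _ (List.mem_append_left _ (ihb h))
      · exact List.mem_cons_of_mem _ (List.mem_append_right _ (ihc h))
  | box b ih =>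
    intro a h
    rw [subf, List.mem_cons] at h
    rcases h with h | h
    · rw [Fml.box.injEq] at h
      subst h
      exact List.mem_cons_of_mem _ (mem_subf_self a)
    · exact List.mem_cons_of_mem _ (ih h)

end Canonical
section CanonicalModel
open Classical

/-- the literal of `a` according to the set `s` -/
def litc (s : Finset Fml) (a : Fml) : Fml := if a ∈ s then a else a.neg

/-- characteristic formula of `s` relative to the list `L` -/
def chi (L : List Fml) (s : Finset Fml) : Fml := conjL (L.map (litc s))

/-- `s` is consistent (over K4) -/
def KCon (L : List Fml) (s : Finset Fml) : Prop := ¬ Prov Ax4 ((chi L s).neg)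

lemma chi_forces {w : Fml → Bool} (hw : BoolEval w) {L : List Fml} {s : Finset Fml}
    (hchi : w (chi L s) = true) {a : Fml} (ha : a ∈ L) : (w a = true ↔ a ∈ s) := by
  rw [chi, hw.conjL_true] at hchi
  have := hchi (litc s a) (List.mem_map_of_mem ha)
  rw [litc] at this
  split_ifs at this with hmem
  · exact ⟨fun _ => hmem, fun _ => this⟩
  · rw [hw.neg', Bool.not_eq_true'] at this
    exact ⟨fun h => absurd h (by rw [this]; simp), fun h => absurd h hmem⟩

/-- any consistent formula is consistent with the characteristic formula of
some subset of L -/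
lemma consistent_extend (L : List Fml) {A : Fml} (h : ¬ Prov Ax4 (A.neg)) :
    ∃ s : Finset Fml, s ⊆ L.toFinset ∧ ¬ Prov Ax4 ((A.and (chi L s)).neg) := by
  by_contra hc
  push_neg at hc
  apply h
  set SS := L.toFinset.powerset.toList with hSS
  refine prov_impsChain (l := SS.map fun s => (A.and (chi L s)).neg) (Prov.taut ?_) ?_
  · intro w hw
    rw [hw.impsChain_true]
    intro hall
    rw [hw.neg', Bool.not_eq_true']
    by_contra hA
    rw [Bool.not_eq_false] at hA
    set s : Finset Fml := L.toFinset.filter (fun a => w a = true) with hs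
    have hsub : s ⊆ L.toFinset := Finset.filter_subset _ _
    have hmem : (A.and (chi L s)).neg ∈ SS.map fun s => (A.and (chi L s)).neg := by
      refine List.mem_map_of_mem ?_
      rw [hSS, Finset.mem_toList, Finset.mem_powerset]
      exact hsub
    have := hall _ hmem
    rw [hw.neg', hw.and', Bool.not_eq_true', Bool.and_eq_false_iff] at this
    rcases this with h1 | h1
    · rw [hA] at h1; exact Bool.noConfusion h1
    · have hchi : w (chi L s) = true := by
        rw [chi, hw.conjL_true]
        intro b hb
        rw [List.mem_map] at hb
        obtain ⟨a, haL, rfl⟩ := hb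
        rw [litc]
        split_ifs with hmem'
        · rw [hs] at hmem'
          exact (Finset.mem_filter.mp hmem').2
        · rw [hw.neg', Bool.not_eq_true']
          by_contra hcon
          rw [Bool.not_eq_false] at hcon
          exact hmem' (by rw [hs]; exact Finset.mem_filter.mpr ⟨List.mem_toFinset.mpr haL, hcon⟩)
      rw [hchi] at h1; exact Bool.noConfusion h1
  · intro b hb
    rw [List.mem_map] at hb
    obtain ⟨s, hsmem, rfl⟩ := hb
    rw [hSS, Finset.mem_toList, Finset.mem_powerset] at hsmem
    exact hc s hsmem

/-- worlds of the canonical model -/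
def Wld (L : List Fml) : Type := {s : Finset Fml // s ⊆ L.toFinset ∧ KCon L s}

noncomputable instance WldFintype (L : List Fml) : Fintype (Wld L) := by
  classical
  refine Fintype.ofInjective
    (fun u : Wld L => (⟨u.val, Finset.mem_powerset.mpr u.2.1⟩ : {t // t ∈ L.toFinset.powerset})) ?_
  intro u v huv
  simp only [Subtype.mk.injEq] at huv
  exact Subtype.ext huv

/-- canonical accessibility -/
def Rc (L : List Fml) (u v : Wld L) : Prop :=
  ∀ a, Fml.box a ∈ L → Fml.box a ∈ u.val → (a ∈ v.val ∧ Fml.box a ∈ v.val)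

lemma Rc_trans (L : List Fml) : Transitive (Rc L) := by
  intro u v t huv hvt a haL haU
  exact hvt a haL (huv a haL haU).2

/-- canonical valuation -/
def Vc (L : List Fml) : ℕ → Set (Wld L) := fun p => {u | Fml.var p ∈ u.val}

/-- coherence: a consistent set is forced to contain ψ whenever ψ ∈ L is a boolean
consequence of the characteristic formula -/
lemma con_mem_of_forced {L : List Fml} {s : Finset Fml} (hcon : KCon L s) {ψ : Fml}
    (hψ : ψ ∈ L) (hf : ∀ w, BoolEval w → w (chi L s) = true → w ψ = true) : ψ ∈ s := by
  by_contra hns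
  apply hcon
  refine Prov.taut ?_
  intro w hw
  rw [hw.neg', Bool.not_eq_true']
  by_contra hcon'
  rw [Bool.not_eq_false] at hcon'
  exact hns ((chi_forces hw hcon' hψ).mp (hf w hw hcon'))

lemma con_not_mem_of_forced {L : List Fml} {s : Finset Fml} (hcon : KCon L s) {ψ : Fml}
    (hψ : ψ ∈ L) (hf : ∀ w, BoolEval w → w (chi L s) = true → w ψ = false) : ψ ∉ s := by
  intro hns
  apply hcon
  refine Prov.taut ?_
  intro w hw
  rw [hw.neg', Bool.not_eq_true']
  by_contra hcon'
  rw [Bool.not_eq_false] at hcon'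
  have := (chi_forces hw hcon' hψ).mpr hns
  rw [hf w hw hcon'] at this
  exact Bool.noConfusion this

lemma con_top {L : List Fml} {s : Finset Fml} (hcon : KCon L s) (h : Fml.top ∈ L) :
    Fml.top ∈ s :=
  con_mem_of_forced hcon h (fun w hw _ => hw.1)

lemma con_neg_iff {L : List Fml} {s : Finset Fml} (hcon : KCon L s) {a : Fml}
    (hna : Fml.neg a ∈ L) (ha : a ∈ L) : (Fml.neg a ∈ s ↔ a ∉ s) := by
  constructor
  · intro hmem hamem
    apply hcon
    refine Prov.taut ?_
    intro w hw
    rw [hw.neg', Bool.not_eq_true']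
    by_contra hcon'
    rw [Bool.not_eq_false] at hcon'
    have h1 := (chi_forces hw hcon' hna).mpr hmem
    have h2 := (chi_forces hw hcon' ha).mpr hamem
    rw [hw.neg', h2] at h1
    exact Bool.noConfusion h1
  · intro hamem
    refine con_mem_of_forced hcon hna (fun w hw hchi => ?_)
    rw [hw.neg', Bool.not_eq_true']
    by_contra hcon'
    rw [Bool.not_eq_false] at hcon'
    exact hamem ((chi_forces hw hchi ha).mp hcon')

lemma con_and_iff {L : List Fml} {s : Finset Fml} (hcon : KCon L s) {a b : Fml}
    (hab : Fml.and a b ∈ L) (ha : a ∈ L) (hb : b ∈ L) :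
    (Fml.and a b ∈ s ↔ a ∈ s ∧ b ∈ s) := by
  constructor
  · intro hmem
    constructor
    · refine con_mem_of_forced hcon ha (fun w hw hchi => ?_)
      have h1 := (chi_forces hw hchi hab).mpr hmem
      rw [hw.and', Bool.and_eq_true] at h1
      exact h1.1
    · refine con_mem_of_forced hcon hb (fun w hw hchi => ?_)
      have h1 := (chi_forces hw hchi hab).mpr hmem
      rw [hw.and', Bool.and_eq_true] at h1
      exact h1.2
  · rintro ⟨ha', hb'⟩
    refine con_mem_of_forced hcon hab (fun w hw hchi => ?_)
    rw [hw.and', Bool.and_eq_true]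
    exact ⟨(chi_forces hw hchi ha).mpr ha', (chi_forces hw hchi hb).mpr hb'⟩

end CanonicalModel
section TruthLemma

/-- the formulas boxed in s (among boxed formulas of L) -/
def boxedIn (L : List Fml) (s : Finset Fml) : List Fml :=
  L.filterMap (fun c => match c with
    | .box a => if Fml.box a ∈ s then some a else none
    | _ => none)

lemma mem_boxedIn {L : List Fml} {s : Finset Fml} {a : Fml} :
    a ∈ boxedIn L s ↔ (Fml.box a ∈ L ∧ Fml.box a ∈ s) := by
  rw [boxedIn, List.mem_filterMap]
  constructor
  · rintro ⟨c, hcL, hfc⟩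
    match c with
    | .var p => simp at hfc
    | .top => simp at hfc
    | .neg x => simp at hfc
    | .and x y => simp at hfc
    | .box x =>
      simp only at hfc
      split_ifs at hfc with hmem
      · rw [Option.some.injEq] at hfc
        subst hfc
        exact ⟨hcL, hmem⟩
  · rintro ⟨hL, hs⟩
    exact ⟨Fml.box a, hL, by simp only; rw [if_pos hs]⟩

lemma ext_mem_of_forced {L : List Fml} {A : Fml} {t : Finset Fml}
    (h : ¬ Prov Ax4 ((A.and (chi L t)).neg)) {ψ : Fml} (hψ : ψ ∈ L)
    (hf : ∀ w, BoolEval w → w A = true → w ψ = true) : ψ ∈ t := by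
  by_contra hns
  apply h
  refine Prov.taut ?_
  intro w hw
  rw [hw.neg', Bool.not_eq_true']
  by_contra hcon'
  rw [Bool.not_eq_false, hw.and', Bool.and_eq_true] at hcon'
  exact hns ((chi_forces hw hcon'.2 hψ).mp (hf w hw hcon'.1))

lemma ext_not_mem_of_forced {L : List Fml} {A : Fml} {t : Finset Fml}
    (h : ¬ Prov Ax4 ((A.and (chi L t)).neg)) {ψ : Fml} (hψ : ψ ∈ L)
    (hf : ∀ w, BoolEval w → w A = true → w ψ = false) : ψ ∉ t := by
  intro hns
  apply h
  refine Prov.taut ?_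
  intro w hw
  rw [hw.neg', Bool.not_eq_true']
  by_contra hcon'
  rw [Bool.not_eq_false, hw.and', Bool.and_eq_true] at hcon'
  have h1 := (chi_forces hw hcon'.2 hψ).mpr hns
  rw [hf w hw hcon'.1] at h1
  exact Bool.noConfusion h1

lemma truth_lemma {L : List Fml}
    (hnegL : ∀ a : Fml, Fml.neg a ∈ L → a ∈ L)
    (handL : ∀ a b : Fml, Fml.and a b ∈ L → a ∈ L ∧ b ∈ L)
    (hboxL : ∀ a : Fml, Fml.box a ∈ L → a ∈ L) :
    ∀ (a : Fml), a ∈ L → ∀ (u : Wld L), (sat (Rc L) (Vc L) u a ↔ a ∈ u.val) := by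
  intro a
  induction a with
  | var p => intro _ u; exact Iff.rfl
  | top =>
    intro ha u
    simp only [sat]
    exact ⟨fun _ => con_top u.2.2 ha, fun _ => trivial⟩
  | neg b ih =>
    intro ha u
    rw [sat_neg, ih (hnegL b ha) u]
    exact (con_neg_iff u.2.2 ha (hnegL b ha)).symm
  | and b c ihb ihc =>
    intro ha u
    rw [sat_and, ihb (handL b c ha).1 u, ihc (handL b c ha).2 u]
    exact (con_and_iff u.2.2 ha (handL b c ha).1 (handL b c ha).2).symm
  | box b ih =>
    intro ha u
    constructor
    · intro hsat
      by_contra hns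
      set s := u.val with hs
      set l := boxedIn L s with hl
      set B := conjL (l.map Fml.boxs) with hB
      set A := B.and (b.neg) with hA
      -- Step 1: A is consistent
      have hconA : ¬ Prov Ax4 (A.neg) := by
        intro hPA
        have h1 : Prov Ax4 (B.imp b) := by
          refine taut_mp1 ?_ hPA
          intro w hw
          rw [hw.imp_true, hw.imp_true]
          intro hAn hB'
          rw [hw.neg', hA, hw.and', hw.neg', hB', Bool.not_eq_true'] at hAn
          simp only [Bool.true_and, Bool.not_eq_false'] at hAn
          exact hAn
        have h2 : Prov Ax4 ((Fml.box B).imp (Fml.box b)) := provK1 h1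
        have h3 : Prov Ax4 ((conjL (l.map Fml.box)).imp (Fml.box B)) :=
          prov_conj_box_boxs (fun _ h => h) l
        apply u.2.2
        refine taut_mp2 ?_ h3 h2
        intro w hw
        rw [hw.imp_true]
        intro h3w
        rw [hw.imp_true]
        intro h2w
        rw [hw.neg', Bool.not_eq_true']
        by_contra hcc
        rw [Bool.not_eq_false] at hcc
        have hlb : w (conjL (l.map Fml.box)) = true := by
          rw [hw.conjL_true]
          intro c hc
          rw [List.mem_map] at hc
          obtain ⟨d, hd, rfl⟩ := hc
          rw [hl, mem_boxedIn] at hd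
          exact (chi_forces hw hcc hd.1).mpr hd.2
        rw [hw.imp_true] at h3w h2w
        have hbb := h2w (h3w hlb)
        exact hns ((chi_forces hw hcc ha).mp hbb)
      -- Step 2: extend A to a world
      obtain ⟨t, htsub, htconA⟩ := consistent_extend L hconA
      have htcon : KCon L t := by
        intro hP
        apply htconA
        refine taut_mp1 ?_ hP
        intro w hw
        rw [hw.imp_true, hw.neg', hw.neg', hw.and']
        intro h1
        rw [Bool.not_eq_true'] at h1
        simp [h1]
      set v : Wld L := ⟨t, htsub, htcon⟩ with hv
      -- Step 3: b ∉ t and Rc u v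
      have hbt : b ∉ t := by
        refine ext_not_mem_of_forced htconA (hboxL b ha) (fun w hw hAw => ?_)
        rw [hA, hw.and', hw.neg', Bool.and_eq_true, Bool.not_eq_true'] at hAw
        exact hAw.2
      have hRuv : Rc L u v := by
        intro c hcL hcs
        have hcl : c ∈ l := by rw [hl, mem_boxedIn]; exact ⟨hcL, hcs⟩
        have hforce : ∀ w, BoolEval w → w A = true →
            (w c = true ∧ w (Fml.box c) = true) := by
          intro w hw hAw
          rw [hA, hw.and', Bool.and_eq_true] at hAw
          have hBw := hAw.1
          rw [hB, hw.conjL_true] at hBw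
          have := hBw (Fml.boxs c) (List.mem_map_of_mem hcl)
          rw [Fml.boxs, hw.and', Bool.and_eq_true] at this
          exact this
        constructor
        · exact ext_mem_of_forced htconA (hboxL c hcL) (fun w hw hAw => (hforce w hw hAw).1)
        · exact ext_mem_of_forced htconA hcL (fun w hw hAw => (hforce w hw hAw).2)
      have hsatv : sat (Rc L) (Vc L) v b := hsat v hRuv
      exact hbt ((ih (hboxL b ha) v).mp hsatv)
    · intro hmem
      rw [sat_box]
      intro v hRv
      exact (ih (hboxL b ha) v).mpr ((hRv b ha hmem).1)

end TruthLemma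
/-- K4 is the intersection of the logics K4C_n over all n. -/
theorem stmt11 (φ : Fml) : Prov Ax4 φ ↔ ∀ n : ℕ, Prov (AxK4C n) φ := by
  constructor
  · intro h n
    exact h.mono Set.subset_union_left
  · intro hall
    by_contra hnp
    set L := subf φ with hL
    have hnegL : ∀ a : Fml, Fml.neg a ∈ L → a ∈ L := fun a h => subf_closed_neg h
    have handL : ∀ a b : Fml, Fml.and a b ∈ L → a ∈ L ∧ b ∈ L := fun a b h => subf_closed_and h
    have hboxL : ∀ a : Fml, Fml.box a ∈ L → a ∈ L := fun a h => subf_closed_box h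
    have hA : ¬ Prov Ax4 ((Fml.neg φ).neg) := by
      intro hP
      apply hnp
      refine taut_mp1 ?_ hP
      intro w hw
      rw [hw.imp_true, hw.neg', hw.neg', Bool.not_not]
      exact fun h => h
    obtain ⟨s, hsub, hconA⟩ := consistent_extend L hA
    have hcon : KCon L s := by
      intro hP
      apply hconA
      refine taut_mp1 ?_ hP
      intro w hw
      rw [hw.imp_true, hw.neg', hw.neg', hw.and']
      intro h1
      rw [Bool.not_eq_true'] at h1
      simp [h1]
    set u : Wld L := ⟨s, hsub, hcon⟩ with hu
    have hφL : φ ∈ L := mem_subf_self φ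
    have hφns : φ ∉ s := by
      refine ext_not_mem_of_forced hconA hφL (fun w hw hAw => ?_)
      rw [hw.neg', Bool.not_eq_true'] at hAw
      exact hAw
    have hnosat : ¬ sat (Rc L) (Vc L) u φ :=
      fun hs => hφns ((truth_lemma hnegL handL hboxL φ hφL u).mp hs)
    exact hnosat (soundness (Rc_trans L) (finite_trans_validates (Rc_trans L))
      (hall (Fintype.card (Wld L))) (Vc L) u)
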